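/- arXiv:2102.12601 — 2 statements merged into one kernel-verified Lean document; each statement's English description precedes it below -/
import Mathlib

section
/- If F(t,x) = exp(a(t)'x + β(t)) where a(t) solves da/dt = K'a(t) with a(T) = e₁ and β(t) solves dβ/dt = -(μ-λ)'a(t) - (1/2)Tr(ΣΩΣ a(t)a(t)') with β(T) = 0, then F satisfies the PDE ∂_t F + (μ-λ-Kx)'∇_x F + (1/2)Tr(ΣΩΣ ∇_{xx}F) = 0 on [0,T)×ℝ^N with terminal condition F(T,x) = exp(e₁'x). -/
open Matrix

noncomputable def dp {N : ℕ} (b : Fin N → ℝ) : (Fin N → ℝ) →L[ℝ] ℝ :=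
  ∑ i, b i • (ContinuousLinearMap.proj i : (Fin N → ℝ) →L[ℝ] ℝ)

lemma dp_apply {N : ℕ} (b y : Fin N → ℝ) : dp b y = b ⬝ᵥ y := by
  simp [dp, dotProduct, ContinuousLinearMap.sum_apply]

lemma dp_single {N : ℕ} (b : Fin N → ℝ) (i : Fin N) : dp b (Pi.single i 1) = b i := by
  simp [dp_apply, dotProduct, Pi.single_apply]

lemma expF_fderiv {N : ℕ} (b : Fin N → ℝ) (c : ℝ) (x : Fin N → ℝ) :
    HasFDerivAt (fun y : Fin N → ℝ => Real.exp (b ⬝ᵥ y + c))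
      (Real.exp (b ⬝ᵥ x + c) • dp b) x := by
  have h1 : HasFDerivAt (fun y : Fin N → ℝ => b ⬝ᵥ y + c) (dp b) x := by
    have : (fun y : Fin N → ℝ => b ⬝ᵥ y + c) = fun y => dp b y + c := by
      funext y; rw [dp_apply]
    rw [this]
    exact (dp b).hasFDerivAt.add_const c
  simpa using h1.exp

example {N : ℕ} (f : ℝ → Fin N → ℝ) (f' : Fin N → ℝ) (t : ℝ) (h : HasDerivAt f f' t) (i : Fin N) :
    HasDerivAt (fun s => f s i) (f' i) t := hasDerivAt_pi.mp h i

/-- If `F(t,x) = exp(a(t)'x + β(t))` where `a` solves `da/dt = Kᵀa(t)`, `a(T) = e₁`, and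
`β` solves `dβ/dt = -(μ-λ)'a(t) - (1/2)Tr(ΣΩΣ a(t)a(t)')`, `β(T) = 0`, then `F` satisfies
`∂ₜF + (μ-λ-Kx)'∇ₓF + (1/2)Tr(ΣΩΣ ∇ₓₓF) = 0` on `[0,T) × ℝᴺ` with `F(T,x) = exp(e₁'x)`. -/
theorem stmt_2 (N : ℕ) (hN : 0 < N) (K Sig Ω : Matrix (Fin N) (Fin N) ℝ)
    (μ lam : Fin N → ℝ) (T : ℝ) (hT : 0 < T)
    (e₁ : Fin N → ℝ) (he₁ : e₁ = Pi.single ⟨0, hN⟩ 1)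
    (a : ℝ → Fin N → ℝ) (β : ℝ → ℝ)
    (haODE : ∀ t : ℝ, HasDerivAt a (Kᵀ.mulVec (a t)) t)
    (haT : a T = e₁)
    (hβODE : ∀ t : ℝ, HasDerivAt β
      (-((μ - lam) ⬝ᵥ a t) - (1 / 2) * (Sig * Ω * Sig * vecMulVec (a t) (a t)).trace) t)
    (hβT : β T = 0)
    (F : ℝ → (Fin N → ℝ) → ℝ)
    (hF : ∀ t x, F t x = Real.exp (a t ⬝ᵥ x + β t)) :
    (∀ t ∈ Set.Ico (0 : ℝ) T, ∀ x : Fin N → ℝ,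
      deriv (fun s => F s x) t
        + (μ - lam - K.mulVec x) ⬝ᵥ (fun i => fderiv ℝ (F t) x (Pi.single i 1))
        + (1 / 2) * (Sig * Ω * Sig *
            Matrix.of (fun i j =>
              fderiv ℝ (fun y => fderiv ℝ (F t) y (Pi.single j 1)) x (Pi.single i 1))).trace
        = 0)
    ∧ ∀ x : Fin N → ℝ, F T x = Real.exp (e₁ ⬝ᵥ x) := by
  have hFfun : F = fun t x => Real.exp (a t ⬝ᵥ x + β t) := by
    funext t x; exact hF t x
  subst hFfun
  constructor
  · intro t _ x
    set E := Real.exp (a t ⬝ᵥ x + β t) with hE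
    set P := (Sig * Ω * Sig * vecMulVec (a t) (a t)).trace with hP
    -- time derivative
    have h1 : HasDerivAt (fun s => a s ⬝ᵥ x) (Kᵀ.mulVec (a t) ⬝ᵥ x) t := by
      simp only [dotProduct]
      exact HasDerivAt.fun_sum fun i _ => (hasDerivAt_pi.mp (haODE t) i).mul_const (x i)
    have h2 := ((h1.fun_add (hβODE t)).exp).deriv
    -- spatial gradient
    have hgrad : ∀ y : Fin N → ℝ,
        fderiv ℝ (fun z : Fin N → ℝ => Real.exp (a t ⬝ᵥ z + β t)) y
          = Real.exp (a t ⬝ᵥ y + β t) • dp (a t) :=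
      fun y => (expF_fderiv (a t) (β t) y).fderiv
    have hgrad1 : (fun i => fderiv ℝ (fun z : Fin N → ℝ => Real.exp (a t ⬝ᵥ z + β t)) x
        (Pi.single i 1)) = E • a t := by
      funext i
      rw [hgrad x]
      simp [dp_single, hE]
    have hsec : ∀ i j : Fin N,
        fderiv ℝ (fun y => fderiv ℝ (fun z : Fin N → ℝ => Real.exp (a t ⬝ᵥ z + β t)) y
          (Pi.single j 1)) x (Pi.single i 1) = E * (a t i * a t j) := by
      intro i j
      have heq : (fun y => fderiv ℝ (fun z : Fin N → ℝ => Real.exp (a t ⬝ᵥ z + β t)) y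
          (Pi.single j 1)) = fun y => Real.exp (a t ⬝ᵥ y + β t) * a t j := by
        funext y
        rw [hgrad y]
        simp [dp_single]
      rw [heq, ((expF_fderiv (a t) (β t) x).mul_const (a t j)).fderiv]
      simp [dp_single, hE]
      ring
    have hm : Matrix.of (fun i j =>
        fderiv ℝ (fun y => fderiv ℝ (fun z : Fin N → ℝ => Real.exp (a t ⬝ᵥ z + β t)) y
          (Pi.single j 1)) x (Pi.single i 1)) = E • vecMulVec (a t) (a t) := by
      ext i j
      rw [Matrix.of_apply, hsec i j]
      simp [Matrix.vecMulVec_apply]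
    rw [h2, hgrad1, hm, Matrix.mul_smul, Matrix.trace_smul, smul_eq_mul,
      dotProduct_smul, sub_dotProduct, sub_dotProduct]
    rw [show Kᵀ.mulVec (a t) ⬝ᵥ x = (K.mulVec x) ⬝ᵥ a t from by
      rw [Matrix.mulVec_transpose, ← Matrix.dotProduct_mulVec, dotProduct_comm]]
    simp only [smul_eq_mul, sub_dotProduct, ← hP, ← hE]
    ring
  · intro x
    show Real.exp (a T ⬝ᵥ x + β T) = _
    rw [haT, hβT, add_zero]
end

section
/- The function u(t,w) = -exp(-γw - (1/2)∫_t^{T̃} Λ²(s) ds) solves the HJB equation ∂_t u + sup_{π∈ℝ^M} [π'μ_F(t) ∂_w u + (1/2) π'Σ_F(t)Σ_F(t)'π ∂_{ww}u] = 0 on [0,T̃)×ℝ with terminal condition u(T̃,w) = -e^{-γw}, where Λ²(t) = μ_F(t)'(Σ_F(t)Σ_F(t)')^{-1}μ_F(t). -/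
open Matrix

lemma hjb_exp_hasDeriv (γ E v : ℝ) :
    HasDerivAt (fun v : ℝ => -Real.exp (-γ * v - E)) (γ * Real.exp (-γ * v - E)) v := by
  have h1 : HasDerivAt (fun v : ℝ => -γ * v - E) (-γ) v := by
    simpa using ((hasDerivAt_id v).const_mul (-γ)).sub_const E
  have h2 := h1.exp.fun_neg
  exact h2.congr_deriv (by ring)

lemma hjb_deriv1 (γ E : ℝ) :
    deriv (fun v : ℝ => -Real.exp (-γ * v - E)) = fun v => γ * Real.exp (-γ * v - E) :=
  funext fun v => (hjb_exp_hasDeriv γ E v).deriv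

lemma hjb_deriv2 (γ E w : ℝ) :
    deriv (fun v : ℝ => γ * Real.exp (-γ * v - E)) w = -γ ^ 2 * Real.exp (-γ * w - E) := by
  have h1 : HasDerivAt (fun v : ℝ => -γ * v - E) (-γ) w := by
    simpa using ((hasDerivAt_id w).const_mul (-γ)).sub_const E
  have h2 := h1.exp.const_mul γ
  have h3 : HasDerivAt (fun v : ℝ => γ * Real.exp (-γ * v - E))
      (-γ ^ 2 * Real.exp (-γ * w - E)) w := by exact h2.congr_deriv (by ring)
  exact h3.deriv

lemma hjb_det_ne_zero (M : ℕ) (A : Matrix (Fin M) (Fin M) ℝ) (h : A.rank = M) :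
    A.det ≠ 0 := by
  intro h0
  obtain ⟨v, hv, hv0⟩ := (Matrix.exists_mulVec_eq_zero_iff).2 h0
  have hrange : LinearMap.range A.mulVecLin = ⊤ := by
    apply Submodule.eq_top_of_finrank_eq
    rw [show Module.finrank ℝ (LinearMap.range A.mulVecLin) = A.rank from rfl, h,
      Module.finrank_pi]
    simp
  have hinj : Function.Injective A.mulVecLin :=
    LinearMap.injective_iff_surjective.2 (LinearMap.range_eq_top.mp hrange)
  exact hv (hinj (show A.mulVecLin v = A.mulVecLin 0 by simpa using hv0))

lemma hjb_sup (M : ℕ) (γ e L : ℝ) (hγ : 0 < γ) (he : 0 < e) (μ : Fin M → ℝ)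
    (A : Matrix (Fin M) (Fin M) ℝ) (hAT : Aᵀ = A)
    (hpsd : ∀ x : Fin M → ℝ, 0 ≤ x ⬝ᵥ A.mulVec x)
    (hdet : A.det ≠ 0)
    (hL : L = μ ⬝ᵥ A⁻¹.mulVec μ) :
    (⨆ π : Fin M → ℝ,
        (π ⬝ᵥ μ) * (γ * e) + 1 / 2 * (π ⬝ᵥ A.mulVec π) * (-γ ^ 2 * e))
      = 1 / 2 * L * e := by
  obtain ⟨πs, hπs⟩ : ∃ p : Fin M → ℝ, p = γ⁻¹ • A⁻¹.mulVec μ := ⟨_, rfl⟩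
  have hAinv : A * A⁻¹ = 1 := Matrix.mul_nonsing_inv _ (isUnit_iff_ne_zero.2 hdet)
  have hAμ : A.mulVec (A⁻¹.mulVec μ) = μ := by
    rw [Matrix.mulVec_mulVec, hAinv, Matrix.one_mulVec]
  have hAπs : A.mulVec πs = γ⁻¹ • μ := by rw [hπs, Matrix.mulVec_smul, hAμ]
  have hdot : ∀ π : Fin M → ℝ, π ⬝ᵥ A.mulVec πs = γ⁻¹ * (π ⬝ᵥ μ) := by
    intro π; rw [hAπs, dotProduct_smul, smul_eq_mul]
  have hsym : ∀ x y : Fin M → ℝ, x ⬝ᵥ A.mulVec y = y ⬝ᵥ A.mulVec x := by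
    intro x y
    rw [Matrix.dotProduct_mulVec, ← Matrix.mulVec_transpose, hAT, dotProduct_comm]
  have hπsμ : πs ⬝ᵥ μ = γ⁻¹ * L := by
    rw [hπs, smul_dotProduct, smul_eq_mul, hL, dotProduct_comm]
  have hquads : πs ⬝ᵥ A.mulVec πs = γ⁻¹ * (γ⁻¹ * L) := by rw [hdot, hπsμ]
  have hub : ∀ π : Fin M → ℝ,
      (π ⬝ᵥ μ) * (γ * e) + 1 / 2 * (π ⬝ᵥ A.mulVec π) * (-γ ^ 2 * e)
        ≤ 1 / 2 * L * e := by
    intro π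
    have h0 := hpsd (π - πs)
    have hexp : (π - πs) ⬝ᵥ A.mulVec (π - πs)
        = π ⬝ᵥ A.mulVec π - 2 * (γ⁻¹ * (π ⬝ᵥ μ)) + γ⁻¹ * (γ⁻¹ * L) := by
      have e1 : πs ⬝ᵥ A.mulVec π = γ⁻¹ * (π ⬝ᵥ μ) := by rw [hsym, hdot]
      simp only [Matrix.mulVec_sub, dotProduct_sub, sub_dotProduct,
        hdot, e1, hquads, hπsμ]
      ring
    rw [hexp] at h0
    have h1 : 0 ≤ γ ^ 2 * (π ⬝ᵥ A.mulVec π) - 2 * γ * (π ⬝ᵥ μ) + L := by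
      have heq : γ ^ 2 * (π ⬝ᵥ A.mulVec π) - 2 * γ * (π ⬝ᵥ μ) + L
          = γ ^ 2 * (π ⬝ᵥ A.mulVec π - 2 * (γ⁻¹ * (π ⬝ᵥ μ)) + γ⁻¹ * (γ⁻¹ * L)) := by
        field_simp
      rw [heq]
      exact mul_nonneg (by positivity) h0
    nlinarith [mul_nonneg he.le h1]
  have hat : (πs ⬝ᵥ μ) * (γ * e) + 1 / 2 * (πs ⬝ᵥ A.mulVec πs) * (-γ ^ 2 * e)
      = 1 / 2 * L * e := by
    rw [hπsμ, hquads]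
    field_simp
    ring
  refine le_antisymm (ciSup_le hub) ?_
  have hbdd : BddAbove (Set.range fun π : Fin M → ℝ =>
      (π ⬝ᵥ μ) * (γ * e) + 1 / 2 * (π ⬝ᵥ A.mulVec π) * (-γ ^ 2 * e)) := by
    refine ⟨1 / 2 * L * e, ?_⟩
    rintro x ⟨π, rfl⟩
    exact hub π
  have := le_ciSup hbdd πs
  rwa [hat] at this

/-- `u(t,w) = -exp(-γw - (1/2)∫_t^{T̃} Λ²(s)ds)` solves the HJB equation
`∂ₜu + sup_{π∈ℝᴹ} [π'μ_F(t) ∂_w u + (1/2) π'Σ_F(t)Σ_F(t)'π ∂_{ww}u] = 0`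
on `[0,T̃)×ℝ` with terminal condition `u(T̃,w) = -e^{-γw}`, where
`Λ²(t) = μ_F(t)'(Σ_F(t)Σ_F(t)')⁻¹μ_F(t)`. -/
theorem stmt_9 (M N : ℕ) (hMN : M ≤ N) (γ T' : ℝ) (hγ : 0 < γ) (hT' : 0 < T')
    (μF : ℝ → Fin M → ℝ) (SigF : ℝ → Matrix (Fin M) (Fin N) ℝ)
    (hμcont : Continuous μF) (hSigcont : Continuous SigF)
    (hrank : ∀ t : ℝ, (SigF t).rank = M)
    (Λsq : ℝ → ℝ)
    (hΛ : ∀ t : ℝ, Λsq t = μF t ⬝ᵥ ((SigF t * (SigF t)ᵀ)⁻¹).mulVec (μF t))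
    (u : ℝ → ℝ → ℝ)
    (hu : ∀ t w : ℝ, u t w = -Real.exp (-γ * w - (1 / 2) * ∫ s in t..T', Λsq s)) :
    (∀ t ∈ Set.Ico (0 : ℝ) T', ∀ w : ℝ,
      deriv (fun s => u s w) t
        + (⨆ π : Fin M → ℝ,
            (π ⬝ᵥ μF t) * deriv (fun v => u t v) w
              + (1 / 2) * (π ⬝ᵥ (SigF t * (SigF t)ᵀ).mulVec π)
                * deriv (deriv (fun v => u t v)) w)
        = 0)
    ∧ ∀ w : ℝ, u T' w = -Real.exp (-γ * w) := by
  have hdet : ∀ t : ℝ, (SigF t * (SigF t)ᵀ).det ≠ 0 := by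
    intro t
    apply hjb_det_ne_zero
    rw [Matrix.rank_self_mul_transpose]
    exact hrank t
  have hΛcont : Continuous Λsq := by
    have hA : Continuous fun t => SigF t * (SigF t)ᵀ :=
      hSigcont.matrix_mul hSigcont.matrix_transpose
    have hInv : Continuous fun t => (SigF t * (SigF t)ᵀ)⁻¹ := by
      simp only [Matrix.inv_def, Ring.inverse_eq_inv']
      exact (hA.matrix_det.inv₀ hdet).smul hA.matrix_adjugate
    have : Continuous fun t => μF t ⬝ᵥ ((SigF t * (SigF t)ᵀ)⁻¹).mulVec (μF t) :=
      hμcont.dotProduct (hInv.matrix_mulVec hμcont)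
    exact (funext hΛ : Λsq = _) ▸ this
  constructor
  · intro t _ w
    set E : ℝ := 1 / 2 * ∫ s in t..T', Λsq s with hE
    have hut : (fun v => u t v) = fun v => -Real.exp (-γ * v - E) := by
      funext v; rw [hu, ← hE]
    -- derivatives in w
    have hdw : deriv (fun v => u t v) w = γ * Real.exp (-γ * w - E) := by
      rw [hut, hjb_deriv1]
    have hdww : deriv (deriv (fun v => u t v)) w = -γ ^ 2 * Real.exp (-γ * w - E) := by
      rw [hut, hjb_deriv1, hjb_deriv2]
    -- derivative in t
    have hI : HasDerivAt (fun s => ∫ x in s..T', Λsq x) (-Λsq t) t :=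
      intervalIntegral.integral_hasDerivAt_left (hΛcont.intervalIntegrable t T')
        (hΛcont.stronglyMeasurable.stronglyMeasurableAtFilter) hΛcont.continuousAt
    have hdt : deriv (fun s => u s w) t
        = -(1 / 2 * Λsq t * Real.exp (-γ * w - E)) := by
      have h2 : HasDerivAt (fun s => -γ * w - 1 / 2 * ∫ x in s..T', Λsq x)
          (1 / 2 * Λsq t) t := by
        have := (hI.const_mul (1 / 2 : ℝ)).const_sub (-γ * w)
        exact this.congr_deriv (by ring)
      have h3 := h2.exp.fun_neg
      have h4 : (fun s => u s w)
          = fun s => -Real.exp (-γ * w - 1 / 2 * ∫ x in s..T', Λsq x) := by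
        funext s; rw [hu]
      rw [h4]
      have h5 := h3.deriv
      rw [h5, hE]
      ring
    rw [hdt]
    simp only [hdw, hdww]
    have hAT : (SigF t * (SigF t)ᵀ)ᵀ = SigF t * (SigF t)ᵀ := by
      simp [Matrix.transpose_mul]
    have hpsd : ∀ x : Fin M → ℝ, 0 ≤ x ⬝ᵥ (SigF t * (SigF t)ᵀ).mulVec x := fun x => by
      simpa using (Matrix.posSemidef_self_mul_conjTranspose (SigF t)).dotProduct_mulVec_nonneg x
    rw [hjb_sup M γ (Real.exp (-γ * w - E)) (Λsq t) hγ (Real.exp_pos _) (μF t)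
      (SigF t * (SigF t)ᵀ) hAT hpsd (hdet t) (hΛ t)]
    ring
  · intro w
    rw [hu]
    simp
end
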